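/- For α ≥ β > 0, the arithmetic-geometric mean satisfies AGM(α, β) = α / ₂F₁(1/2, 1/2; 1; 1 − (β/α)²), where ₂F₁ is the Gauss hypergeometric function. -/

import Mathlib

open Filter

/-- The AGM iteration: `a₀ = α, b₀ = β`, `a_{n+1} = (aₙ+bₙ)/2`, `b_{n+1} = √(aₙbₙ)`. -/
noncomputable def agmSeq (α β : ℝ) : ℕ → ℝ × ℝ
  | 0 => (α, β)
  | (n + 1) =>
      (((agmSeq α β n).1 + (agmSeq α β n).2) / 2,
        Real.sqrt ((agmSeq α β n).1 * (agmSeq α β n).2))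

/-- The Gauss hypergeometric series `₂F₁(a,b;c;x) = Σ_{n≥0} (a)ₙ(b)ₙ/((c)ₙ·n!)·xⁿ`. -/
noncomputable def hyp2F1 (a b c x : ℝ) : ℝ :=
  ∑' n : ℕ, ((ascPochhammer ℝ n).eval a * (ascPochhammer ℝ n).eval b)
    / ((ascPochhammer ℝ n).eval c * (Nat.factorial n : ℝ)) * x ^ n

section AGMAux

open Real Set MeasureTheory intervalIntegral

noncomputable def wc (n : ℕ) : ℝ := ∏ i ∈ Finset.range n, (2*i+1)/(2*i+2)

lemma wc_zero : wc 0 = 1 := by simp [wc]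

lemma wc_succ (n : ℕ) : wc (n+1) = wc n * ((2*n+1)/(2*n+2)) := by
  rw [wc, Finset.prod_range_succ]; rfl

lemma wc_pos (n : ℕ) : 0 < wc n := by
  apply Finset.prod_pos
  intro i _
  positivity

lemma wc_le_one (n : ℕ) : wc n ≤ 1 := by
  apply Finset.prod_le_one
  · intro i _; positivity
  · intro i _
    rw [div_le_one (by positivity)]
    linarith

/-- convolution identity `∑_{k≤n} c_k c_{n-k} = 1`. -/
lemma wc_conv (n : ℕ) : ∑ k ∈ Finset.range (n+1), wc k * wc (n-k) = 1 := by
  induction n with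
  | zero => simp [wc_zero]
  | succ n ih =>
    -- key: (n+1) * S_{n+1} = (n+1) * S_n
    have sym : ∀ m : ℕ, ∑ k ∈ Finset.range (m+1), (k : ℝ) * (wc k * wc (m-k)) =
        (m : ℝ)/2 * ∑ k ∈ Finset.range (m+1), wc k * wc (m-k) := by
      intro m
      have h2 := Finset.sum_range_reflect (fun k => (k : ℝ) * (wc k * wc (m-k))) (m+1)
      simp only [Nat.add_sub_cancel] at h2
      have h3 : ∀ k ∈ Finset.range (m+1),
          ((m - k : ℕ) : ℝ) * (wc (m-k) * wc (m-(m-k))) =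
          ((m : ℝ) - k) * (wc k * wc (m-k)) := by
        intro k hk
        rw [Finset.mem_range] at hk
        have hk' : k ≤ m := Nat.lt_succ_iff.mp hk
        rw [Nat.cast_sub hk']
        have : m - (m - k) = k := by omega
        rw [this]; ring
      rw [Finset.sum_congr rfl h3] at h2
      have expand : ∑ k ∈ Finset.range (m+1), ((m : ℝ) - k) * (wc k * wc (m-k)) =
          (m : ℝ) * ∑ k ∈ Finset.range (m+1), wc k * wc (m-k)
          - ∑ k ∈ Finset.range (m+1), (k : ℝ) * (wc k * wc (m-k)) := by
        rw [Finset.mul_sum, ← Finset.sum_sub_distrib]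
        apply Finset.sum_congr rfl
        intro k _; ring
      rw [expand] at h2
      linarith
    -- now the induction step
    have key : ∑ k ∈ Finset.range (n+2), (k : ℝ) * (wc k * wc (n+1-k)) =
        ∑ j ∈ Finset.range (n+1), ((j : ℝ) + 1/2) * (wc j * wc (n-j)) := by
      rw [Finset.sum_range_succ'] -- ∑_{k∈range(n+2)} f k = ∑_{j∈range(n+1)} f (j+1) + f 0
      simp only [Nat.cast_zero, zero_mul, add_zero]
      apply Finset.sum_congr rfl
      intro j hj
      rw [Finset.mem_range] at hj
      have hj' : j ≤ n := Nat.lt_succ_iff.mp hj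
      have h1 : n + 1 - (j+1) = n - j := by omega
      rw [h1, wc_succ j, Nat.cast_add, Nat.cast_one]
      have h2 : (2*(j:ℝ)+2) ≠ 0 := by positivity
      field_simp
    have S1 := sym (n+1)
    rw [key] at S1
    have expand2 : ∑ j ∈ Finset.range (n+1), ((j : ℝ) + 1/2) * (wc j * wc (n-j)) =
        ∑ j ∈ Finset.range (n+1), (j : ℝ) * (wc j * wc (n-j))
        + 1/2 * ∑ j ∈ Finset.range (n+1), wc j * wc (n-j) := by
      rw [Finset.mul_sum, ← Finset.sum_add_distrib]
      apply Finset.sum_congr rfl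
      intro k _; ring
    rw [expand2, sym n, ih] at S1
    -- S1 : (n)/2 * 1 + 1/2 * 1 = (n+1)/2 * S_{n+1}
    have hn1 : ((n:ℝ)+1)/2 ≠ 0 := by positivity
    push_cast at S1
    have hS : ((n:ℝ)+1)/2 * ∑ k ∈ Finset.range (n+1+1), wc k * wc (n+1-k)
        = ((n:ℝ)+1)/2 * 1 := by rw [← S1]; ring
    exact mul_left_cancel₀ hn1 hS

lemma wc_def (n : ℕ) : wc n = ∏ i ∈ Finset.range n, (2*(i:ℝ)+1)/(2*i+2) := rfl

lemma wc_summable {x : ℝ} (hx0 : 0 ≤ x) (hx1 : x < 1) : Summable (fun n => wc n * x ^ n) := by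
  apply Summable.of_nonneg_of_le
    (fun n => mul_nonneg (wc_pos n).le (pow_nonneg hx0 n)) (fun n => ?_)
    (summable_geometric_of_lt_one hx0 hx1)
  calc wc n * x ^ n ≤ 1 * x ^ n := by
        apply mul_le_mul_of_nonneg_right (wc_le_one n) (by positivity)
    _ = x ^ n := one_mul _

lemma wc_tsum_sq {x : ℝ} (hx0 : 0 ≤ x) (hx1 : x < 1) :
    (∑' n, wc n * x ^ n) * (∑' n, wc n * x ^ n) = (1 - x)⁻¹ := by
  have hs := wc_summable hx0 hx1
  have hnorm : Summable (fun n => ‖wc n * x ^ n‖) := by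
    simpa [Real.norm_eq_abs, abs_of_nonneg (le_of_lt (wc_pos _)), abs_of_nonneg hx0,
      abs_of_nonneg (pow_nonneg hx0 _), abs_mul, abs_pow] using hs
  rw [tsum_mul_tsum_eq_tsum_sum_range_of_summable_norm hnorm hnorm]
  have : ∀ n : ℕ, ∑ k ∈ Finset.range (n+1), (wc k * x ^ k) * (wc (n-k) * x ^ (n-k)) = x ^ n := by
    intro n
    have : ∀ k ∈ Finset.range (n+1), (wc k * x ^ k) * (wc (n-k) * x ^ (n-k))
        = (wc k * wc (n-k)) * x ^ n := by
      intro k hk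
      rw [Finset.mem_range] at hk
      have : x ^ k * x ^ (n-k) = x ^ n := by
        rw [← pow_add]; congr 1; omega
      calc (wc k * x ^ k) * (wc (n-k) * x ^ (n-k)) = (wc k * wc (n-k)) * (x ^ k * x ^ (n-k)) := by
            ring
        _ = (wc k * wc (n-k)) * x ^ n := by rw [this]
    rw [Finset.sum_congr rfl this, ← Finset.sum_mul, wc_conv, one_mul]
  rw [tsum_congr this, tsum_geometric_of_lt_one hx0 hx1]

lemma wc_tsum_eq {x : ℝ} (hx0 : 0 ≤ x) (hx1 : x < 1) :
    (∑' n, wc n * x ^ n) = 1 / Real.sqrt (1 - x) := by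
  have hs := wc_summable hx0 hx1
  have hpos : 0 < ∑' n, wc n * x ^ n := by
    have h0 : (0:ℝ) < wc 0 * x ^ 0 := by simp [wc_zero]
    exact lt_of_lt_of_le h0 (Summable.le_tsum hs 0
      (fun n _ => mul_nonneg (wc_pos n).le (pow_nonneg hx0 n)))
  have h1x : 0 < 1 - x := by linarith
  have hsq : (∑' n, wc n * x ^ n) ^ 2 = (Real.sqrt (1-x))⁻¹ ^ 2 := by
    rw [sq, wc_tsum_sq hx0 hx1, sq, ← mul_inv, Real.mul_self_sqrt h1x.le]
  have h2 := congrArg Real.sqrt hsq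
  rw [Real.sqrt_sq hpos.le, Real.sqrt_sq (inv_nonneg.mpr (Real.sqrt_nonneg _))] at h2
  rw [h2, one_div]

-- Wallis
lemma wallis (n : ℕ) : ∫ θ in (0:ℝ)..(π/2), Real.sin θ ^ (2*n) = π/2 * wc n := by
  have hc : Continuous (fun x : ℝ => Real.sin x ^ (2*n)) := by continuity
  have split := intervalIntegral.integral_add_adjacent_intervals
    (μ := volume) (a := (0:ℝ)) (b := π/2) (c := π) (f := fun x => Real.sin x ^ (2*n))
    (hc.intervalIntegrable _ _) (hc.intervalIntegrable _ _)
  have hrefl : (∫ x in (π/2)..π, Real.sin x ^ (2*n)) = ∫ x in (0:ℝ)..(π/2), Real.sin x ^ (2*n) := by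
    have h := intervalIntegral.integral_comp_sub_left (a := (0:ℝ)) (b := π/2)
      (fun x => Real.sin x ^ (2*n)) π
    have h2 : (∫ x in (0:ℝ)..(π/2), Real.sin (π - x) ^ (2*n))
        = ∫ x in (0:ℝ)..(π/2), Real.sin x ^ (2*n) := by
      apply intervalIntegral.integral_congr
      intro x _
      simp [Real.sin_pi_sub]
    rw [h2] at h
    norm_num at h
    rw [h]
    norm_num [show π - π/2 = π/2 by ring]
  have even := integral_sin_pow_even (n := n)
  rw [← split, hrefl] at even
  rw [wc_def]
  linarith


lemma poch_one (n : ℕ) : (ascPochhammer ℝ n).eval (1:ℝ) = (n.factorial : ℝ) := by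
  induction n with
  | zero => simp [ascPochhammer_zero]
  | succ n ih =>
    rw [ascPochhammer_succ_eval, ih, Nat.factorial_succ]
    push_cast; ring

lemma poch_half (n : ℕ) : (ascPochhammer ℝ n).eval ((1:ℝ)/2) = (n.factorial : ℝ) * wc n := by
  induction n with
  | zero => simp [ascPochhammer_zero, wc_zero]
  | succ n ih =>
    rw [ascPochhammer_succ_eval, ih, wc_succ, Nat.factorial_succ]
    have h : (2*(n:ℝ)+2) ≠ 0 := by positivity
    push_cast
    field_simp
    ring

noncomputable def gk (a b : ℝ) (t : ℝ) : ℝ := 1 / Real.sqrt ((t^2+a^2)*(t^2+b^2))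
noncomputable def K (a b : ℝ) : ℝ := ∫ t in Ioi (0:ℝ), gk a b t
noncomputable def J (a b : ℝ) : ℝ :=
  ∫ θ in Ioo (0:ℝ) (π/2), 1 / Real.sqrt (a^2*Real.cos θ^2 + b^2*Real.sin θ^2)

lemma tan_image : (fun θ : ℝ => Real.tan θ) '' Ioo 0 (π/2) = Ioi 0 := by
  apply Set.eq_of_subset_of_subset
  · rintro y ⟨θ, hθ, rfl⟩
    exact Real.tan_pos_of_pos_of_lt_pi_div_two hθ.1 hθ.2
  · intro y hy
    refine ⟨Real.arctan y, ⟨by rw [← Real.arctan_zero]; exact Real.arctan_strictMono hy, Real.arctan_lt_pi_div_two y⟩, Real.tan_arctan y⟩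

lemma K_eq_J {a b : ℝ} (ha : 0 < a) (hb : 0 < b) : K a b = J a b := by
  have himg : (fun θ : ℝ => b * Real.tan θ) '' Ioo 0 (π/2) = Ioi 0 := by
    rw [show (fun θ : ℝ => b * Real.tan θ) = (fun y => b * y) ∘ (fun θ => Real.tan θ) from rfl,
      Set.image_comp, tan_image]
    ext y
    simp only [Set.mem_image, Set.mem_Ioi]
    constructor
    · rintro ⟨x, hx, rfl⟩; exact mul_pos hb hx
    · intro hy; exact ⟨y/b, div_pos hy hb, by field_simp⟩
  have hcos : ∀ θ ∈ Ioo (0:ℝ) (π/2), 0 < Real.cos θ := by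
    intro θ hθ
    exact Real.cos_pos_of_mem_Ioo ⟨by linarith [hθ.1, Real.pi_div_two_pos], hθ.2⟩
  have hderiv : ∀ θ ∈ Ioo (0:ℝ) (π/2),
      HasDerivWithinAt (fun θ => b * Real.tan θ) (b / Real.cos θ ^ 2) (Ioo 0 (π/2)) θ := by
    intro θ hθ
    have h := (Real.hasDerivAt_tan (hcos θ hθ).ne').const_mul b
    simpa [div_eq_mul_inv, mul_comm, mul_assoc, one_div] using h.hasDerivWithinAt
  have hinj : Set.InjOn (fun θ => b * Real.tan θ) (Ioo 0 (π/2)) := by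
    intro x hx y hy hxy
    have hs : Ioo (0:ℝ) (π/2) ⊆ Ioo (-(π/2)) (π/2) := by
      intro z hz; exact ⟨by linarith [hz.1, Real.pi_div_two_pos], hz.2⟩
    refine Real.injOn_tan (hs hx) (hs hy) ?_
    have := mul_left_cancel₀ hb.ne' hxy
    exact this
  have := MeasureTheory.integral_image_eq_integral_abs_deriv_smul
    measurableSet_Ioo hderiv hinj (gk a b)
  rw [himg] at this
  rw [K, this, J]
  apply setIntegral_congr_fun measurableSet_Ioo
  intro θ hθ
  have hc := hcos θ hθ
  have hc2 : (0:ℝ) < Real.cos θ ^ 2 := by positivity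
  have key : ((b * Real.tan θ)^2 + a^2) * ((b * Real.tan θ)^2 + b^2)
      = (a^2*Real.cos θ^2 + b^2*Real.sin θ^2) * (b / Real.cos θ^2)^2 := by
    rw [Real.tan_eq_sin_div_cos]
    have hs2 : Real.sin θ ^ 2 = 1 - Real.cos θ ^ 2 := by
      rw [Real.sin_sq]
    rw [mul_pow, div_pow, hs2]
    field_simp
    ring
  have hpos1 : (0:ℝ) ≤ a^2*Real.cos θ^2 + b^2*Real.sin θ^2 := by positivity
  have hbc : (0:ℝ) < b / Real.cos θ^2 := by positivity
  show |b / Real.cos θ^2| • gk a b (b * Real.tan θ)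
      = 1 / Real.sqrt (a^2*Real.cos θ^2 + b^2*Real.sin θ^2)
  have hX : (0:ℝ) < a^2*Real.cos θ^2 + b^2*Real.sin θ^2 :=
    add_pos_of_pos_of_nonneg (by positivity) (by positivity)
  have hsX : (0:ℝ) < Real.sqrt (a^2*Real.cos θ^2 + b^2*Real.sin θ^2) := Real.sqrt_pos.mpr hX
  rw [abs_of_pos hbc, smul_eq_mul, gk, key, Real.sqrt_mul hpos1, Real.sqrt_sq hbc.le]
  rw [mul_one_div]
  rw [mul_comm (Real.sqrt _) (b / Real.cos θ^2), ← div_div, div_self hbc.ne']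

lemma gk_even (a b x : ℝ) : gk a b |x| = gk a b x := by
  rw [gk, gk, sq_abs]

lemma K_invariance {a b : ℝ} (ha : 0 < a) (hb : 0 < b) :
    K ((a+b)/2) (Real.sqrt (a*b)) = K a b := by
  set A := (a+b)/2 with hA
  set B := Real.sqrt (a*b) with hB
  have hB2 : B^2 = a*b := Real.sq_sqrt (by positivity)
  have habs : ∫ x : ℝ, gk A B x = 2 * K A B := by
    rw [K, ← integral_comp_abs (f := gk A B)]
    exact MeasureTheory.integral_congr_ae (Filter.Eventually.of_forall fun x => (gk_even A B x).symm)
  -- Newman substitution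
  set f : ℝ → ℝ := fun t => (t - a*b/t)/2 with hf
  have himg : f '' Ioi 0 = univ := by
    apply Set.eq_univ_of_forall
    intro u
    refine ⟨u + Real.sqrt (u^2 + a*b), ?_, ?_⟩
    · have h1 : |u| < Real.sqrt (u^2 + a*b) := by
        rw [show |u| = Real.sqrt (u^2) by rw [Real.sqrt_sq_eq_abs]]
        exact Real.sqrt_lt_sqrt (sq_nonneg u) (by nlinarith)
      have := neg_abs_le u
      simp only [Set.mem_Ioi]
      linarith [h1, neg_le_abs u]
    · have hs : Real.sqrt (u^2 + a*b) ^ 2 = u^2 + a*b := Real.sq_sqrt (by positivity)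
      have ht : 0 < u + Real.sqrt (u^2 + a*b) := by
        have h1 : |u| < Real.sqrt (u^2 + a*b) := by
          rw [show |u| = Real.sqrt (u^2) by rw [Real.sqrt_sq_eq_abs]]
          exact Real.sqrt_lt_sqrt (sq_nonneg u) (by nlinarith)
        linarith [neg_le_abs u]
      rw [hf]
      field_simp
      nlinarith [hs]
  have hderiv : ∀ t ∈ Ioi (0:ℝ), HasDerivWithinAt f ((1 + a*b/t^2)/2) (Ioi 0) t := by
    intro t ht
    have ht0 : t ≠ 0 := (ne_of_gt ht)
    have h1 : HasDerivAt (fun t : ℝ => t - a*b/t) (1 + a*b/t^2) t := by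
      have h2 : HasDerivAt (fun t : ℝ => a*b/t) (-(a*b)/t^2) t := by
        simpa [div_eq_mul_inv, neg_div] using ((hasDerivAt_inv ht0).const_mul (a*b))
      exact ((hasDerivAt_id' (x := t)).sub h2).congr_deriv (by ring)
    exact (h1.div_const 2).hasDerivWithinAt
  have hinj : Set.InjOn f (Ioi 0) := by
    intro x hx y hy hxy
    simp only [Set.mem_Ioi] at hx hy
    rw [hf] at hxy
    simp only at hxy
    have h1 : x - a*b/x = y - a*b/y := by linarith
    have h2 : (x - y) * (1 + a*b/(x*y)) = 0 := by
      field_simp at h1 ⊢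
      nlinarith [h1]
    have h3 : 0 < 1 + a*b/(x*y) := by positivity
    have := mul_eq_zero.mp h2
    rcases this with h | h
    · linarith
    · exfalso; linarith
  have hsub := MeasureTheory.integral_image_eq_integral_abs_deriv_smul
    measurableSet_Ioi hderiv hinj (gk A B)
  rw [himg] at hsub
  have hpt : ∀ t ∈ Ioi (0:ℝ), |(1 + a*b/t^2)/2| • gk A B (f t) = 2 * gk a b t := by
    intro t ht
    simp only [Set.mem_Ioi] at ht
    have ht0 : t ≠ 0 := ne_of_gt ht
    have hP : (0:ℝ) < (t^2+a^2)*(t^2+b^2) := by positivity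
    have hcpos : (0:ℝ) < (t^2+a*b)/(4*t^2) := by positivity
    have key : ((f t)^2 + A^2) * ((f t)^2 + B^2)
        = ((t^2+a^2)*(t^2+b^2)) * ((t^2+a*b)/(4*t^2))^2 := by
      rw [hf, hA, hB2]
      field_simp
      ring
    have hfd : |(1 + a*b/t^2)/2| = 2 * ((t^2+a*b)/(4*t^2)) := by
      rw [abs_of_pos (by positivity)]
      field_simp
      ring
    rw [gk, key, Real.sqrt_mul hP.le, Real.sqrt_sq hcpos.le, hfd, smul_eq_mul, gk]
    rw [mul_one_div, mul_div_assoc, div_mul_eq_div_div, div_right_comm, div_self hcpos.ne']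
  rw [setIntegral_congr_fun measurableSet_Ioi hpt] at hsub
  rw [MeasureTheory.setIntegral_univ] at hsub
  rw [habs] at hsub
  rw [MeasureTheory.integral_const_mul] at hsub
  rw [← K] at hsub
  linarith

lemma J_series {a b : ℝ} (hb : 0 < b) (hba : b ≤ a) :
    J a b = π/(2*a) * ∑' n, wc n^2 * (1-(b/a)^2)^n := by
  have ha : 0 < a := lt_of_lt_of_le hb hba
  set m : ℝ := 1 - (b/a)^2 with hm
  have hm0 : 0 ≤ m := by
    rw [hm, sub_nonneg]
    have : b/a ≤ 1 := (div_le_one ha).mpr hba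
    have h0 : 0 ≤ b/a := by positivity
    nlinarith
  have hm1 : m < 1 := by
    rw [hm]
    have : 0 < (b/a)^2 := by positivity
    linarith
  -- pointwise expansion
  have hpt : ∀ θ : ℝ, 1 / Real.sqrt (a^2*Real.cos θ^2 + b^2*Real.sin θ^2)
      = ∑' n, (1/a) * wc n * m^n * Real.sin θ^(2*n) := by
    intro θ
    have hsin : Real.sin θ^2 ≤ 1 := Real.sin_sq_le_one θ
    have hsin0 : 0 ≤ Real.sin θ^2 := sq_nonneg _
    have hx0 : 0 ≤ m * Real.sin θ^2 := by positivity
    have hx1 : m * Real.sin θ^2 < 1 := by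
      rcases eq_or_lt_of_le hm0 with h | h
      · rw [← h]; norm_num
      · calc m * Real.sin θ^2 ≤ m * 1 := by nlinarith
          _ < 1 := by linarith
    have key : a^2*Real.cos θ^2 + b^2*Real.sin θ^2 = a^2 * (1 - m * Real.sin θ^2) := by
      rw [hm]
      have : Real.cos θ^2 = 1 - Real.sin θ^2 := Real.cos_sq' θ
      rw [this]
      field_simp
      ring
    rw [key, Real.sqrt_mul (by positivity), Real.sqrt_sq ha.le]
    have hser := wc_tsum_eq hx0 hx1
    rw [one_div, mul_inv, ← one_div, ← one_div, ← hser]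
    rw [← tsum_mul_left]
    apply tsum_congr
    intro n
    rw [mul_pow, pow_mul]
    ring
  rw [J]
  rw [setIntegral_congr_fun measurableSet_Ioo (fun θ _ => hpt θ)]
  -- swap integral and sum
  have hmeas : ∀ n : ℕ, AEStronglyMeasurable
      (fun θ : ℝ => (1/a) * wc n * m^n * Real.sin θ^(2*n))
      (volume.restrict (Ioo 0 (π/2))) := by
    intro n
    exact ((continuous_const.mul ((Real.continuous_sin).pow (2*n))).aestronglyMeasurable)
  have hbound : ∀ n : ℕ, ∫⁻ θ in Ioo (0:ℝ) (π/2),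
      ‖(1/a) * wc n * m^n * Real.sin θ^(2*n)‖₊ ≤
      ENNReal.ofReal ((1/a) * m^n) * ENNReal.ofReal (π/2) := by
    intro n
    calc ∫⁻ θ in Ioo (0:ℝ) (π/2), ‖(1/a) * wc n * m^n * Real.sin θ^(2*n)‖₊
        ≤ ∫⁻ _ in Ioo (0:ℝ) (π/2), ENNReal.ofReal ((1/a) * m^n) := by
          apply lintegral_mono
          intro θ
          simp only
          rw [← enorm_eq_nnnorm, ← ofReal_norm]
          apply ENNReal.ofReal_le_ofReal
          rw [Real.norm_eq_abs, pow_mul, abs_mul, abs_mul, abs_mul, abs_pow (Real.sin θ ^ 2), abs_sq]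
          have hs : (Real.sin θ^2)^n ≤ 1 :=
            pow_le_one₀ (sq_nonneg _) (Real.sin_sq_le_one θ)
          have hwc := wc_pos n
          have hwc1 := wc_le_one n
          have hia : (0:ℝ) < 1/a := by positivity
          have hmn : (0:ℝ) ≤ m^n := pow_nonneg hm0 n
          have hsn : (0:ℝ) ≤ (Real.sin θ^2)^n := pow_nonneg (sq_nonneg _) n
          have e1 : |1/a| = 1/a := abs_of_pos hia
          have e2 : |wc n| = wc n := abs_of_pos hwc
          have e3 : |m^n| = m^n := abs_of_nonneg hmn
          rw [e1, e2, e3]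
          have h1 : wc n * (Real.sin θ^2)^n ≤ 1 := by nlinarith
          calc 1/a * wc n * m^n * (Real.sin θ^2)^n
              = (1/a * m^n) * (wc n * (Real.sin θ^2)^n) := by ring
            _ ≤ (1/a * m^n) * 1 :=
              mul_le_mul_of_nonneg_left h1 (mul_nonneg hia.le hmn)
            _ = 1/a * m^n := mul_one _
      _ = ENNReal.ofReal ((1/a) * m^n) * ENNReal.ofReal (π/2) := by
          rw [MeasureTheory.setLIntegral_const, Real.volume_Ioo, sub_zero]
  have hsum_ne : (∑' n : ℕ, ∫⁻ θ in Ioo (0:ℝ) (π/2),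
      ‖(1/a) * wc n * m^n * Real.sin θ^(2*n)‖₊) ≠ ⊤ := by
    apply ne_top_of_le_ne_top ?_ (ENNReal.tsum_le_tsum hbound)
    have heq : ∀ n : ℕ, ENNReal.ofReal ((1/a) * m^n) * ENNReal.ofReal (π/2)
        = (ENNReal.ofReal ((1/a) * (π/2))) * (ENNReal.ofReal m)^n := by
      intro n
      rw [ENNReal.ofReal_mul (by positivity), ENNReal.ofReal_mul (by positivity),
        ENNReal.ofReal_pow hm0]
      ring
    rw [tsum_congr heq, ENNReal.tsum_mul_left, ENNReal.tsum_geometric]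
    apply ENNReal.mul_ne_top ENNReal.ofReal_ne_top
    rw [Ne, ENNReal.inv_eq_top]
    intro h0
    have := ENNReal.ofReal_lt_one.mpr hm1
    rw [tsub_eq_zero_iff_le] at h0
    exact absurd h0 (not_le.mpr this)
  rw [MeasureTheory.integral_tsum (fun n => hmeas n) hsum_ne]
  have hWn : ∀ n : ℕ, ∫ θ in Ioo (0:ℝ) (π/2),
      (1/a) * wc n * m^n * Real.sin θ^(2*n) = (1/a) * wc n * m^n * (π/2 * wc n) := by
    intro n
    rw [MeasureTheory.integral_const_mul, ← MeasureTheory.integral_Ioc_eq_integral_Ioo,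
      ← intervalIntegral.integral_of_le (by positivity : (0:ℝ) ≤ π/2), wallis n]
  rw [tsum_congr hWn]
  have : ∀ n : ℕ, (1/a) * wc n * m^n * (π/2 * wc n) = (π/(2*a)) * (wc n^2 * m^n) := by
    intro n
    field_simp
  rw [tsum_congr this, tsum_mul_left]

lemma J_cont {a b : ℝ} (hb : 0 < b) (hba : b ≤ a) :
    Continuous (fun θ : ℝ => 1 / Real.sqrt (a^2*Real.cos θ^2 + b^2*Real.sin θ^2)) := by
  have ha : 0 < a := lt_of_lt_of_le hb hba
  have hX : ∀ θ : ℝ, b^2 ≤ a^2*Real.cos θ^2 + b^2*Real.sin θ^2 := by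
    intro θ
    have h1 : Real.sin θ^2 + Real.cos θ^2 = 1 := Real.sin_sq_add_cos_sq θ
    have h2 : (0:ℝ) ≤ (a^2-b^2) * Real.cos θ^2 :=
      mul_nonneg (by nlinarith) (sq_nonneg _)
    nlinarith
  apply Continuous.div continuous_const
  · apply Real.continuous_sqrt.comp
    continuity
  · intro θ
    have := hX θ
    have : (0:ℝ) < a^2*Real.cos θ^2 + b^2*Real.sin θ^2 := by nlinarith
    exact (Real.sqrt_pos.mpr this).ne'

lemma J_integrableOn {a b : ℝ} (hb : 0 < b) (hba : b ≤ a) :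
    IntegrableOn (fun θ : ℝ => 1 / Real.sqrt (a^2*Real.cos θ^2 + b^2*Real.sin θ^2))
      (Ioo 0 (π/2)) := by
  apply ((J_cont hb hba).integrableOn_Ioc).mono_set Set.Ioo_subset_Ioc_self

lemma J_bounds {a b : ℝ} (hb : 0 < b) (hba : b ≤ a) :
    π/(2*a) ≤ J a b ∧ J a b ≤ π/(2*b) := by
  have ha : 0 < a := lt_of_lt_of_le hb hba
  have hsincos : ∀ θ : ℝ, Real.sin θ^2 + Real.cos θ^2 = 1 :=
    fun θ => Real.sin_sq_add_cos_sq θ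
  have hXb : ∀ θ : ℝ, b^2 ≤ a^2*Real.cos θ^2 + b^2*Real.sin θ^2 := by
    intro θ
    have h2 : (0:ℝ) ≤ (a^2-b^2) * Real.cos θ^2 :=
      mul_nonneg (by nlinarith) (sq_nonneg _)
    nlinarith [hsincos θ]
  have hXa : ∀ θ : ℝ, a^2*Real.cos θ^2 + b^2*Real.sin θ^2 ≤ a^2 := by
    intro θ
    have h2 : (0:ℝ) ≤ (a^2-b^2) * Real.sin θ^2 :=
      mul_nonneg (by nlinarith) (sq_nonneg _)
    nlinarith [hsincos θ]
  have hlow : ∀ θ : ℝ, 1/a ≤ 1 / Real.sqrt (a^2*Real.cos θ^2 + b^2*Real.sin θ^2) := by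
    intro θ
    have h1 : Real.sqrt (a^2*Real.cos θ^2 + b^2*Real.sin θ^2) ≤ a := by
      have := Real.sqrt_le_sqrt (hXa θ)
      rwa [Real.sqrt_sq ha.le] at this
    have h2 : 0 < Real.sqrt (a^2*Real.cos θ^2 + b^2*Real.sin θ^2) := by
      apply Real.sqrt_pos.mpr; nlinarith [hXb θ]
    exact one_div_le_one_div_of_le h2 h1
  have hhigh : ∀ θ : ℝ, 1 / Real.sqrt (a^2*Real.cos θ^2 + b^2*Real.sin θ^2) ≤ 1/b := by
    intro θ
    have h1 : b ≤ Real.sqrt (a^2*Real.cos θ^2 + b^2*Real.sin θ^2) := by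
      have := Real.sqrt_le_sqrt (hXb θ)
      rwa [Real.sqrt_sq hb.le] at this
    exact one_div_le_one_div_of_le hb h1
  have hvol : (volume (Ioo (0:ℝ) (π/2))).toReal = π/2 := by
    rw [Real.volume_Ioo, sub_zero, ENNReal.toReal_ofReal (by positivity)]
  have hconst : ∀ c : ℝ, ∫ _ in Ioo (0:ℝ) (π/2), c = π/2 * c := by
    intro c
    rw [setIntegral_const, measureReal_def, hvol, smul_eq_mul]
  constructor
  · have := setIntegral_mono_on ((integrableOn_const_iff (C := 1/a)).mpr (Or.inr ?_))
      (J_integrableOn hb hba) measurableSet_Ioo (fun θ _ => hlow θ)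
    · rw [hconst] at this
      calc π/(2*a) = π/2 * (1/a) := by ring
        _ ≤ J a b := this
    · rw [Real.volume_Ioo]; exact ENNReal.ofReal_lt_top
  · have := setIntegral_mono_on (J_integrableOn hb hba)
      ((integrableOn_const_iff (C := 1/b)).mpr (Or.inr ?_)) measurableSet_Ioo (fun θ _ => hhigh θ)
    · rw [hconst] at this
      calc J a b ≤ π/2 * (1/b) := this
        _ = π/(2*b) := by ring
    · rw [Real.volume_Ioo]; exact ENNReal.ofReal_lt_top

lemma wc_sq_summable {x : ℝ} (hx0 : 0 ≤ x) (hx1 : x < 1) :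
    Summable (fun n => wc n^2 * x ^ n) := by
  apply Summable.of_nonneg_of_le
    (fun n => mul_nonneg (sq_nonneg _) (pow_nonneg hx0 n)) (fun n => ?_)
    (summable_geometric_of_lt_one hx0 hx1)
  have h1 : wc n^2 ≤ 1 := by nlinarith [wc_pos n, wc_le_one n]
  calc wc n^2 * x ^ n ≤ 1 * x ^ n :=
        mul_le_mul_of_nonneg_right h1 (pow_nonneg hx0 n)
    _ = x ^ n := one_mul _

lemma hyp_eq (x : ℝ) : hyp2F1 (1/2) (1/2) 1 x = ∑' n, wc n^2 * x^n := by
  rw [hyp2F1]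
  apply tsum_congr
  intro n
  rw [poch_half, poch_one]
  have h : (n.factorial : ℝ) ≠ 0 := Nat.cast_ne_zero.mpr n.factorial_ne_zero
  field_simp

end AGMAux

/-- For `α ≥ β > 0`, the common limit `AGM(α,β)` of the AGM sequences satisfies
`AGM(α, β) = α / ₂F₁(1/2, 1/2; 1; 1 − (β/α)²)`. -/
theorem agm_eq_hyp2F1 (α β L : ℝ) (hβ : 0 < β) (hβα : β ≤ α)
    (h1 : Tendsto (fun n => (agmSeq α β n).1) atTop (nhds L))
    (h2 : Tendsto (fun n => (agmSeq α β n).2) atTop (nhds L)) :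
    L = α / hyp2F1 (1 / 2) (1 / 2) 1 (1 - (β / α) ^ 2) := by
  have hα : 0 < α := lt_of_lt_of_le hβ hβα
  -- basic invariants of the AGM sequence
  have hmain : ∀ n, 0 < (agmSeq α β n).2 ∧ (agmSeq α β n).2 ≤ (agmSeq α β n).1 := by
    intro n
    induction n with
    | zero => exact ⟨hβ, hβα⟩
    | succ n ih =>
      obtain ⟨hb, hba⟩ := ih
      have ha : 0 < (agmSeq α β n).1 := lt_of_lt_of_le hb hba
      constructor
      · show 0 < Real.sqrt ((agmSeq α β n).1 * (agmSeq α β n).2)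
        exact Real.sqrt_pos.mpr (mul_pos ha hb)
      · show Real.sqrt ((agmSeq α β n).1 * (agmSeq α β n).2)
            ≤ ((agmSeq α β n).1 + (agmSeq α β n).2) / 2
        have hsq : (agmSeq α β n).1 * (agmSeq α β n).2
            ≤ (((agmSeq α β n).1 + (agmSeq α β n).2) / 2)^2 := by
          nlinarith [sq_nonneg ((agmSeq α β n).1 - (agmSeq α β n).2)]
        have := Real.sqrt_le_sqrt hsq
        rwa [Real.sqrt_sq (by positivity)] at this
  -- the integral K is invariant along the iteration
  have hK : ∀ n, K (agmSeq α β n).1 (agmSeq α β n).2 = K α β := by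
    intro n
    induction n with
    | zero => rfl
    | succ n ih =>
      have hb := (hmain n).1
      have hba := (hmain n).2
      have ha := lt_of_lt_of_le hb hba
      show K (((agmSeq α β n).1 + (agmSeq α β n).2) / 2)
          (Real.sqrt ((agmSeq α β n).1 * (agmSeq α β n).2)) = K α β
      rw [K_invariance ha hb, ih]
  -- β is a lower bound for the bₙ
  have hbmono : ∀ n, β ≤ (agmSeq α β n).2 := by
    intro n
    induction n with
    | zero => exact le_rfl
    | succ n ih =>
      have hb := (hmain n).1
      have hba := (hmain n).2
      have step : (agmSeq α β n).2 ≤ Real.sqrt ((agmSeq α β n).1 * (agmSeq α β n).2) := by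
        have hsq : (agmSeq α β n).2^2 ≤ (agmSeq α β n).1 * (agmSeq α β n).2 := by nlinarith
        have := Real.sqrt_le_sqrt hsq
        rwa [Real.sqrt_sq hb.le] at this
      exact le_trans ih step
  have hL : 0 < L :=
    lt_of_lt_of_le hβ (ge_of_tendsto h2 (Filter.Eventually.of_forall hbmono))
  -- bounds for K α β
  have hKb : ∀ n, Real.pi/(2*(agmSeq α β n).1) ≤ K α β ∧ K α β ≤ Real.pi/(2*(agmSeq α β n).2) := by
    intro n
    have hb := (hmain n).1
    have hba := (hmain n).2
    have := J_bounds hb hba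
    rw [← K_eq_J (lt_of_lt_of_le hb hba) hb, hK n] at this
    exact this
  -- limits of the bounds
  have t1 : Tendsto (fun n => Real.pi/(2*(agmSeq α β n).1)) atTop (nhds (Real.pi/(2*L))) := by
    apply Tendsto.div tendsto_const_nhds (h1.const_mul 2)
    positivity
  have t2 : Tendsto (fun n => Real.pi/(2*(agmSeq α β n).2)) atTop (nhds (Real.pi/(2*L))) := by
    apply Tendsto.div tendsto_const_nhds (h2.const_mul 2)
    positivity
  have hKL : K α β = Real.pi/(2*L) := by
    apply le_antisymm
    · exact ge_of_tendsto t2 (Filter.Eventually.of_forall fun n => (hKb n).2)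
    · exact le_of_tendsto t1 (Filter.Eventually.of_forall fun n => (hKb n).1)
  -- the series value
  set m : ℝ := 1 - (β/α)^2 with hm
  have hm0 : 0 ≤ m := by
    rw [hm, sub_nonneg]
    have h0 : β/α ≤ 1 := (div_le_one hα).mpr hβα
    have h0' : 0 ≤ β/α := by positivity
    nlinarith
  have hm1 : m < 1 := by
    rw [hm]
    have : 0 < (β/α)^2 := by positivity
    linarith
  have hser : K α β = Real.pi/(2*α) * ∑' n, wc n^2 * m^n := by
    rw [K_eq_J hα hβ, J_series hβ hβα]
  have hF : hyp2F1 (1/2) (1/2) 1 m = ∑' n, wc n^2 * m^n := hyp_eq m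
  have hF1 : 1 ≤ ∑' n, wc n^2 * m^n := by
    have hs := wc_sq_summable hm0 hm1
    have h0 : wc 0^2 * m^0 = 1 := by simp [wc_zero]
    calc (1:ℝ) = wc 0^2 * m^0 := h0.symm
      _ ≤ ∑' n, wc n^2 * m^n :=
        Summable.le_tsum hs 0 (fun n _ => mul_nonneg (sq_nonneg _) (pow_nonneg hm0 n))
  have hFpos : 0 < ∑' n, wc n^2 * m^n := lt_of_lt_of_le one_pos hF1
  rw [hF]
  rw [hser] at hKL
  have hReal.pi : (0:ℝ) < Real.pi := Real.pi_pos
  rw [eq_div_iff hFpos.ne']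
  have hcalc : Real.pi/(2*α) * (∑' n, wc n^2 * m^n) * (2*L) = Real.pi/(2*L) * (2*L) := by
    rw [← hKL]
  field_simp at hcalc
  nlinarith [hcalc]
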